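/- Let λ > 0 and let b_n > 0 solve √(π/2) b_n exp(b_n²/2) = n with a_n = 1/b_n. Then for every real x, F_λ^n(a_n x + b_n) → exp(-e^{-x}) as n → ∞. -/

import Mathlib

open Real MeasureTheory Filter Set

noncomputable def stdPhi (x : ℝ) : ℝ := (Real.sqrt (2 * Real.pi))⁻¹ * Real.exp (-x ^ 2 / 2)

noncomputable def stdCdf (x : ℝ) : ℝ := ∫ t in Set.Iic x, stdPhi t

noncomputable def snCdf (l x : ℝ) : ℝ := ∫ t in Set.Iic x, 2 * stdPhi t * stdCdf (l * t)

lemma stdPhi_eq (x : ℝ) : stdPhi x = (Real.sqrt (2 * Real.pi))⁻¹ * Real.exp (-(1/2 : ℝ) * x ^ 2) := by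
  rw [stdPhi]; ring_nf

lemma stdPhi_pos (x : ℝ) : 0 < stdPhi x := by
  apply mul_pos (inv_pos.2 (Real.sqrt_pos.2 (by positivity))) (Real.exp_pos _)

lemma stdPhi_neg (x : ℝ) : stdPhi (-x) = stdPhi x := by simp [stdPhi]

lemma continuous_stdPhi : Continuous stdPhi := by
  unfold stdPhi; fun_prop

lemma integrable_stdPhi : Integrable stdPhi := by
  have := (integrable_exp_neg_mul_sq (by norm_num : (0:ℝ) < 1/2)).const_mul (Real.sqrt (2 * Real.pi))⁻¹
  exact this.congr (by filter_upwards with x using by rw [stdPhi_eq])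

lemma integral_stdPhi : ∫ x, stdPhi x = 1 := by
  have h := integral_gaussian (1/2 : ℝ)
  have : ∫ x, stdPhi x = (Real.sqrt (2 * Real.pi))⁻¹ * ∫ x, Real.exp (-(1/2:ℝ) * x ^ 2) := by
    rw [← integral_const_mul]; exact integral_congr_ae (by filter_upwards with x using by rw [stdPhi_eq])
  rw [this, h]
  rw [show (π / (1/2 : ℝ)) = 2 * π by ring]
  rw [inv_mul_cancel₀ (by positivity)]

lemma stdCdf_nonneg (x : ℝ) : 0 ≤ stdCdf x :=
  setIntegral_nonneg measurableSet_Iic fun t _ => (stdPhi_pos t).le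

lemma stdCdf_Ioi (y : ℝ) : stdCdf y + (∫ t in Ioi y, stdPhi t) = 1 := by
  rw [stdCdf, ← Set.compl_Iic, integral_add_compl measurableSet_Iic integrable_stdPhi,
    integral_stdPhi]

lemma integral_Ioi_stdPhi_nonneg (y : ℝ) : 0 ≤ ∫ t in Ioi y, stdPhi t :=
  setIntegral_nonneg measurableSet_Ioi fun t _ => (stdPhi_pos t).le

lemma stdCdf_le_one (x : ℝ) : stdCdf x ≤ 1 := by
  have := stdCdf_Ioi x
  nlinarith [integral_Ioi_stdPhi_nonneg x]

lemma stdCdf_neg (y : ℝ) : stdCdf (-y) = ∫ t in Ioi y, stdPhi t := by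
  rw [stdCdf]
  have : ∀ x, stdPhi x = stdPhi (-x) := fun x => (stdPhi_neg x).symm
  calc ∫ t in Iic (-y), stdPhi t = ∫ t in Iic (-y), stdPhi (-t) := by
        exact setIntegral_congr_fun measurableSet_Iic fun t _ => this t
    _ = ∫ t in Ioi y, stdPhi t := by rw [integral_comp_neg_Iic]; norm_num

lemma stdCdf_add_neg (y : ℝ) : stdCdf y + stdCdf (-y) = 1 := by
  rw [stdCdf_neg]; exact stdCdf_Ioi y

lemma stdCdf_mono : Monotone stdCdf := by
  intro a c hac
  exact setIntegral_mono_set integrable_stdPhi.integrableOn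
    (Eventually.of_forall fun t => (stdPhi_pos t).le)
    (HasSubset.Subset.eventuallyLE (Iic_subset_Iic.2 hac))

lemma stdCdf_tendsto_one : Tendsto stdCdf atTop (nhds 1) := by
  have h : Tendsto (fun x : ℝ => ∫ t in Iic x, stdPhi t) atTop
      (nhds (∫ t in ⋃ x : ℝ, Iic x, stdPhi t)) := by
    apply tendsto_setIntegral_of_monotone (fun x => measurableSet_Iic)
      (fun a c hac => Iic_subset_Iic.2 hac)
    rw [iUnion_Iic]; exact integrable_stdPhi.integrableOn
  rw [iUnion_Iic] at h
  simp [integral_stdPhi] at h; exact h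

lemma stdCdf_pos (x : ℝ) : 0 < stdCdf x := by
  have h1 : (∫ t in Ioo (x-1) x, stdPhi t) ≤ stdCdf x :=
    setIntegral_mono_set integrable_stdPhi.integrableOn
      (Eventually.of_forall fun t => (stdPhi_pos t).le)
      (HasSubset.Subset.eventuallyLE (fun t ht => le_of_lt ht.2))
  have h2 : 0 < ∫ t in Ioo (x-1) x, stdPhi t := by
    apply (setIntegral_pos_iff_support_of_nonneg_ae
      (Eventually.of_forall fun t => (stdPhi_pos t).le) integrable_stdPhi.integrableOn).2
    have hs : (Function.support stdPhi) = univ := by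
      ext t; simp [Function.support, (stdPhi_pos t).ne']
    rw [hs, univ_inter, Real.volume_Ioo]
    simp
  linarith

noncomputable def snPdf (l t : ℝ) : ℝ := 2 * stdPhi t * stdCdf (l * t)

lemma measurable_stdCdf : Measurable stdCdf := stdCdf_mono.measurable

lemma measurable_snPdf (l : ℝ) : Measurable (snPdf l) := by
  apply Measurable.mul
  · exact (continuous_stdPhi.measurable).const_mul 2
  · exact measurable_stdCdf.comp (measurable_id.const_mul l)

lemma snPdf_pos (l t : ℝ) : 0 < snPdf l t :=
  mul_pos (mul_pos two_pos (stdPhi_pos t)) (stdCdf_pos _)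

lemma snPdf_le (l t : ℝ) : snPdf l t ≤ 2 * stdPhi t := by
  have h1 : stdCdf (l * t) ≤ 1 := stdCdf_le_one _
  rw [snPdf]
  nlinarith [stdPhi_pos t]

lemma integrable_snPdf (l : ℝ) : Integrable (snPdf l) := by
  apply Integrable.mono' (integrable_stdPhi.const_mul 2)
    (measurable_snPdf l).aestronglyMeasurable
  filter_upwards with t
  rw [Real.norm_eq_abs, abs_of_pos (snPdf_pos l t)]
  exact snPdf_le l t

lemma integral_snPdf (l : ℝ) : ∫ t, snPdf l t = 1 := by
  have h1 : ∫ t, snPdf l t = ∫ t, 2 * stdPhi t * stdCdf (-(l * t)) := by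
    rw [← integral_neg_eq_self (fun t => snPdf l t) volume]
    apply integral_congr_ae; filter_upwards with t
    rw [snPdf, stdPhi_neg]; ring_nf
  have h2 : (∫ t, snPdf l t) + (∫ t, 2 * stdPhi t * stdCdf (-(l * t))) = 2 := by
    rw [← integral_add (integrable_snPdf l)]
    · have : ∀ t : ℝ, snPdf l t + 2 * stdPhi t * stdCdf (-(l * t)) = 2 * stdPhi t := by
        intro t
        have := stdCdf_add_neg (l * t)
        rw [snPdf]; linear_combination (2 * stdPhi t) * this
      simp_rw [this]
      rw [integral_const_mul, integral_stdPhi, mul_one]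
    · have : Integrable (fun t => snPdf (-l) t) := integrable_snPdf (-l)
      apply this.congr; filter_upwards with t; rw [snPdf]; ring_nf
  linarith [h1]

lemma snCdf_eq (l x : ℝ) : snCdf l x = 1 - ∫ t in Ioi x, snPdf l t := by
  have := integral_add_compl (measurableSet_Iic : MeasurableSet (Iic x)) (integrable_snPdf l) (μ := volume)
  rw [Set.compl_Iic] at this
  rw [integral_snPdf] at this
  rw [snCdf]
  have hrw : (∫ t in Iic x, 2 * stdPhi t * stdCdf (l * t)) = ∫ t in Iic x, snPdf l t := rfl
  rw [hrw]; linarith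

lemma hasDerivAt_stdPhi (s : ℝ) : HasDerivAt stdPhi (-s * stdPhi s) s := by
  have h1 : HasDerivAt (fun u : ℝ => -u ^ 2 / 2) (-s) s := by
    have := ((hasDerivAt_pow 2 s).neg.div_const 2)
    simpa using this.congr_deriv (by ring)
  have h2 := h1.exp
  have h3 := h2.const_mul (Real.sqrt (2 * Real.pi))⁻¹
  apply h3.congr_deriv
  rw [stdPhi]; ring

lemma stdPhi_tendsto_zero : Tendsto stdPhi atTop (nhds 0) := by
  have h1 : Tendsto (fun s : ℝ => -s ^ 2 / 2) atTop atBot := by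
    apply Tendsto.atBot_div_const two_pos
    exact tendsto_neg_atBot_iff.2 (tendsto_pow_atTop two_ne_zero)
  have h2 := Real.tendsto_exp_atBot.comp h1
  have h3 := h2.const_mul (Real.sqrt (2 * Real.pi))⁻¹
  rw [mul_zero] at h3
  exact h3

lemma integrable_mul_stdPhi : Integrable (fun s : ℝ => s * stdPhi s) := by
  have := (integrable_mul_exp_neg_mul_sq (by norm_num : (0:ℝ) < 1/2)).const_mul
    (Real.sqrt (2 * Real.pi))⁻¹
  apply this.congr
  filter_upwards with s
  rw [stdPhi_eq]; ring

lemma integral_Ioi_mul_stdPhi (t : ℝ) : ∫ s in Ioi t, s * stdPhi s = stdPhi t := by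
  have h := integral_Ioi_of_hasDerivAt_of_tendsto' (f := fun u => -stdPhi u)
    (f' := fun s => s * stdPhi s) (a := t)
    (fun s _ => by exact (hasDerivAt_stdPhi s).neg.congr_deriv (by ring))
    integrable_mul_stdPhi.integrableOn
    (by simpa using stdPhi_tendsto_zero.neg)
  simpa using h

lemma mills_upper {t : ℝ} (ht : 0 < t) : (∫ s in Ioi t, stdPhi s) ≤ stdPhi t / t := by
  have hint : IntegrableOn (fun s => (s / t) * stdPhi s) (Ioi t) := by
    have := (integrable_mul_stdPhi.integrableOn (s := Ioi t)).const_mul (1/t)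
    apply this.congr
    filter_upwards with s
    ring
  have h1 : (∫ s in Ioi t, stdPhi s) ≤ ∫ s in Ioi t, (s / t) * stdPhi s := by
    apply setIntegral_mono_on integrable_stdPhi.integrableOn hint measurableSet_Ioi
    intro s hs
    have h2 : (1:ℝ) ≤ s / t := (one_le_div ht).2 (le_of_lt hs)
    nlinarith [stdPhi_pos s]
  have h3 : ∫ s in Ioi t, (s / t) * stdPhi s = stdPhi t / t := by
    have : ∀ s, (s / t) * stdPhi s = (1/t) * (s * stdPhi s) := fun s => by ring
    simp_rw [this]
    rw [integral_const_mul, integral_Ioi_mul_stdPhi]; ring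
  linarith

lemma integrable_mills_aux {t : ℝ} (ht : 0 < t) :
    IntegrableOn (fun s => (1 - 3 * (s ^ 4)⁻¹) * stdPhi s) (Ioi t) := by
  apply Integrable.mono' ((integrable_stdPhi.integrableOn (s := Ioi t)).const_mul (1 + 3 * (t^4)⁻¹))
  · apply Measurable.aestronglyMeasurable
    exact (((measurable_id.pow_const 4).inv.const_mul 3).const_sub 1).mul
      continuous_stdPhi.measurable
  · filter_upwards [ae_restrict_mem measurableSet_Ioi] with s hs
    have hst : t ≤ s := le_of_lt hs
    have hs0 : 0 < s := lt_of_lt_of_le ht hst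
    have h4 : (s ^ 4)⁻¹ ≤ (t ^ 4)⁻¹ := by
      exact inv_anti₀ (by positivity) (pow_le_pow_left₀ ht.le hst 4)
    have hp := stdPhi_pos s
    rw [Real.norm_eq_abs, abs_mul, abs_of_pos hp]
    have : |1 - 3 * (s ^ 4)⁻¹| ≤ 1 + 3 * (t ^ 4)⁻¹ := by
      rw [abs_le]
      constructor <;> nlinarith [inv_pos.2 (pow_pos hs0 4), inv_pos.2 (pow_pos ht 4)]
    nlinarith

lemma mills_lower {t : ℝ} (ht : 0 < t) :
    stdPhi t * (t⁻¹ - (t ^ 3)⁻¹) ≤ ∫ s in Ioi t, stdPhi s := by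
  have key : ∫ s in Ioi t, (1 - 3 * (s ^ 4)⁻¹) * stdPhi s = stdPhi t * (t⁻¹ - (t ^ 3)⁻¹) := by
    have h := integral_Ioi_of_hasDerivAt_of_tendsto'
      (f := fun u => (-u⁻¹ + (u ^ 3)⁻¹) * stdPhi u)
      (f' := fun s => (1 - 3 * (s ^ 4)⁻¹) * stdPhi s) (a := t) (m := 0)
      ?_ (integrable_mills_aux ht) ?_
    · rw [h]; ring
    · intro s hs
      have hs0 : 0 < s := lt_of_lt_of_le ht hs
      have h1 := ((hasDerivAt_inv hs0.ne').neg.add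
        ((hasDerivAt_pow 3 s).inv (pow_ne_zero 3 hs0.ne')))
      have h2 := h1.mul (hasDerivAt_stdPhi s)
      refine h2.congr_deriv ?_
      simp only [Pi.add_apply, Pi.neg_apply, Pi.inv_apply]
      norm_num
      field_simp
      ring
    · have ha : Tendsto (fun u : ℝ => -u⁻¹ + (u ^ 3)⁻¹) atTop (nhds 0) := by
        have h1 : Tendsto (fun u : ℝ => u⁻¹) atTop (nhds 0) := tendsto_inv_atTop_zero
        have h2 : Tendsto (fun u : ℝ => (u ^ 3)⁻¹) atTop (nhds 0) := by
          have := (tendsto_pow_atTop three_ne_zero (α := ℝ)).inv_tendsto_atTop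
          exact this
        have := h1.neg.add h2
        simpa using this
      have hb := ha.mul stdPhi_tendsto_zero
      rw [mul_zero] at hb
      exact hb
  rw [← key]
  apply setIntegral_mono_on (integrable_mills_aux ht) integrable_stdPhi.integrableOn
    measurableSet_Ioi
  intro s hs
  have hs0 : 0 < s := lt_of_lt_of_le ht (le_of_lt hs)
  nlinarith [stdPhi_pos s, inv_pos.2 (pow_pos hs0 4)]

noncomputable def snTail (l x : ℝ) : ℝ := ∫ t in Ioi x, snPdf l t

lemma snCdf_eq_tail (l x : ℝ) : snCdf l x = 1 - snTail l x := snCdf_eq l x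

lemma snTail_le {l t : ℝ} (ht : 0 < t) : snTail l t ≤ 2 * (stdPhi t / t) := by
  have h1 : snTail l t ≤ ∫ s in Ioi t, 2 * stdPhi s :=
    setIntegral_mono_on (integrable_snPdf l).integrableOn
      ((integrable_stdPhi.const_mul 2).integrableOn) measurableSet_Ioi
      (fun s _ => snPdf_le l s)
  rw [integral_const_mul] at h1
  have := mills_upper ht
  linarith

lemma snTail_ge {l t : ℝ} (hl : 0 < l) (ht : 0 < t) :
    2 * stdCdf (l * t) * (stdPhi t * (t⁻¹ - (t ^ 3)⁻¹)) ≤ snTail l t := by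
  have h1 : (∫ s in Ioi t, 2 * stdCdf (l * t) * stdPhi s) ≤ snTail l t := by
    apply setIntegral_mono_on
      ((integrable_stdPhi.const_mul (2 * stdCdf (l * t))).integrableOn)
      (integrable_snPdf l).integrableOn measurableSet_Ioi
    intro s hs
    have h2 : stdCdf (l * t) ≤ stdCdf (l * s) :=
      stdCdf_mono (mul_le_mul_of_nonneg_left (le_of_lt hs) hl.le)
    have := stdPhi_pos s
    rw [snPdf]
    nlinarith
  rw [integral_const_mul] at h1
  have h3 := mills_lower ht
  nlinarith [stdCdf_pos (l * t)]

lemma snTail_pos (l t : ℝ) : 0 < snTail l t := by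
  rw [snTail]
  apply (setIntegral_pos_iff_support_of_nonneg_ae
    (Eventually.of_forall fun s => (snPdf_pos l s).le) (integrable_snPdf l).integrableOn).2
  have hs : (Function.support (snPdf l)) = univ := by
    ext s; simp [Function.support, (snPdf_pos l s).ne']
  rw [hs, univ_inter, Real.volume_Ioi]
  simp

lemma b_tendsto (b : ℕ → ℝ)
    (hb : ∀ n : ℕ, 1 ≤ n → 0 < b n ∧
      Real.sqrt (Real.pi / 2) * b n * Real.exp ((b n) ^ 2 / 2) = n) :
    Tendsto b atTop atTop := by
  rw [tendsto_atTop]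
  intro M
  set M' := max M 1 with hM'
  have hM'1 : (1:ℝ) ≤ M' := le_max_right _ _
  obtain ⟨N, hN⟩ := exists_nat_gt (Real.sqrt (Real.pi/2) * M' * Real.exp (M'^2/2))
  filter_upwards [eventually_ge_atTop (max N 1)] with n hn
  have hn1 : 1 ≤ n := le_trans (le_max_right _ _) hn
  obtain ⟨hbp, hbe⟩ := hb n hn1
  by_contra h
  push_neg at h
  have hlt : b n < M' := lt_of_lt_of_le h (le_max_left _ _)
  have hsq : Real.sqrt (Real.pi/2) > 0 := Real.sqrt_pos.2 (by positivity)
  have he : Real.exp ((b n)^2/2) ≤ Real.exp (M'^2/2) := by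
    apply Real.exp_le_exp.2
    nlinarith
  have hle : (n:ℝ) ≤ Real.sqrt (Real.pi/2) * M' * Real.exp (M'^2/2) := by
    rw [← hbe]
    have h0 : (0:ℝ) < Real.exp ((b n)^2/2) := Real.exp_pos _
    have hbm : b n * Real.exp ((b n)^2/2) ≤ M' * Real.exp (M'^2/2) :=
      mul_le_mul hlt.le he h0.le (by linarith)
    calc Real.sqrt (Real.pi/2) * b n * Real.exp ((b n)^2/2)
        = Real.sqrt (Real.pi/2) * (b n * Real.exp ((b n)^2/2)) := by ring
      _ ≤ Real.sqrt (Real.pi/2) * (M' * Real.exp (M'^2/2)) :=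
          mul_le_mul_of_nonneg_left hbm hsq.le
      _ = Real.sqrt (Real.pi/2) * M' * Real.exp (M'^2/2) := by ring
  have hNn : (N:ℝ) ≤ (n:ℝ) := Nat.cast_le.2 (le_trans (le_max_left _ _) hn)
  linarith

theorem stmt_8 (l : ℝ) (hl : 0 < l) (b : ℕ → ℝ)
    (hb : ∀ n : ℕ, 1 ≤ n → 0 < b n ∧
      Real.sqrt (Real.pi / 2) * b n * Real.exp ((b n) ^ 2 / 2) = n)
    (x : ℝ) :
    Tendsto (fun n : ℕ => (snCdf l ((b n)⁻¹ * x + b n)) ^ n) atTop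
      (nhds (Real.exp (-Real.exp (-x)))) := by
  have htop : Tendsto b atTop atTop := b_tendsto b hb
  set u : ℕ → ℝ := fun n => (b n)⁻¹ * x + b n with hu
  have hbinv : Tendsto (fun n => (b n)⁻¹) atTop (nhds 0) := tendsto_inv_atTop_zero.comp htop
  have hutop : Tendsto u atTop atTop :=
    Filter.Tendsto.add_atTop (hbinv.mul_const x) htop
  -- eventual lower bounds
  have hev : ∀ᶠ n : ℕ in atTop, 1 ≤ n ∧ |x| + 1 ≤ b n := by
    filter_upwards [eventually_ge_atTop 1, htop.eventually_ge_atTop (|x| + 1)] with n h1 h2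
    exact ⟨h1, h2⟩
  have hu_ge : ∀ n : ℕ, |x| + 1 ≤ b n → 1 ≤ u n := by
    intro n hbn
    have hb1 : (1:ℝ) ≤ b n := by nlinarith [abs_nonneg x]
    have hb0 : (0:ℝ) < b n := by linarith
    have hinv : (b n)⁻¹ ≤ 1 := by
      rw [inv_le_one_iff₀]; right; exact hb1
    have hinv0 : (0:ℝ) < (b n)⁻¹ := inv_pos.2 hb0
    have h1 : (b n)⁻¹ * x ≥ -|x| := by
      nlinarith [neg_abs_le x, abs_nonneg x]
    show 1 ≤ (b n)⁻¹ * x + b n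
    nlinarith
  -- the key identity
  set E : ℕ → ℝ := fun n => (b n / u n) * Real.exp (-x - x^2/(2*(b n)^2)) with hE
  have heq : ∀ n : ℕ, 1 ≤ n → |x| + 1 ≤ b n →
      (n:ℝ) * (2 * (stdPhi (u n) / u n)) = E n := by
    intro n hn1 hbn
    obtain ⟨hbp, hbe⟩ := hb n hn1
    have hu0 : (0:ℝ) < u n := lt_of_lt_of_le one_pos (hu_ge n hbn)
    rw [← hbe, stdPhi]
    have h2π : Real.sqrt (2*Real.pi) = Real.sqrt 2 * Real.sqrt Real.pi :=
      Real.sqrt_mul (by norm_num) _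
    have hπ2 : Real.sqrt (Real.pi/2) = Real.sqrt Real.pi / Real.sqrt 2 :=
      Real.sqrt_div Real.pi_pos.le 2
    have h2 : Real.sqrt 2 * Real.sqrt 2 = 2 := Real.mul_self_sqrt (by norm_num)
    have hs2 : (0:ℝ) < Real.sqrt 2 := Real.sqrt_pos.2 (by norm_num)
    have hsπ : (0:ℝ) < Real.sqrt Real.pi := Real.sqrt_pos.2 Real.pi_pos
    have hexp : Real.exp ((b n)^2/2) * Real.exp (-(u n)^2/2) = Real.exp (-x - x^2/(2*(b n)^2)) := by
      rw [← Real.exp_add]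
      congr 1
      rw [hu]
      field_simp
      ring
    rw [h2π, hπ2]
    simp only [hE]
    rw [← hexp]
    field_simp
    rw [Real.sq_sqrt (by norm_num)]
  -- limits
  have hb2 : Tendsto (fun n => x^2/(2*(b n)^2)) atTop (nhds 0) := by
    have h1 : Tendsto (fun n => ((b n)^2)⁻¹) atTop (nhds 0) :=
      tendsto_inv_atTop_zero.comp ((tendsto_pow_atTop two_ne_zero).comp htop)
    have h2 := h1.const_mul (x^2/2)
    rw [mul_zero] at h2
    apply h2.congr
    intro n; ring
  have hexp_lim : Tendsto (fun n => Real.exp (-x - x^2/(2*(b n)^2))) atTop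
      (nhds (Real.exp (-x))) := by
    have h1 : Tendsto (fun n => -x - x^2/(2*(b n)^2)) atTop (nhds (-x)) := by
      have := (tendsto_const_nhds (x := (-x : ℝ)) (f := atTop (α := ℕ))).sub hb2
      simpa using this
    exact (Real.continuous_exp.continuousAt.tendsto).comp h1
  have hbu : Tendsto (fun n => b n / u n) atTop (nhds 1) := by
    have h0 : Tendsto (fun n => x * ((b n)^2)⁻¹ + 1) atTop (nhds 1) := by
      have h1 : Tendsto (fun n => ((b n)^2)⁻¹) atTop (nhds 0) :=
        tendsto_inv_atTop_zero.comp ((tendsto_pow_atTop two_ne_zero).comp htop)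
      have := (h1.const_mul x).add (tendsto_const_nhds (x := (1:ℝ)))
      simpa using this
    have h1 := h0.inv₀ one_ne_zero
    rw [inv_one] at h1
    apply h1.congr'
    filter_upwards [htop.eventually_ge_atTop (|x| + 1)] with n hbn
    have hb0 : (0:ℝ) < b n := by nlinarith [abs_nonneg x]
    have hu0 : (0:ℝ) < u n := lt_of_lt_of_le one_pos (hu_ge n hbn)
    have hxb : x + (b n)^2 > 0 := by
      have : u n = (x + (b n)^2) / b n := by rw [hu]; field_simp
      rw [this] at hu0
      exact (div_pos_iff.1 hu0).resolve_right (fun h => absurd hb0 (not_lt.2 h.2.le)) |>.1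
    rw [hu]
    field_simp
  have hElim : Tendsto E atTop (nhds (Real.exp (-x))) := by
    have := hbu.mul hexp_lim
    rw [one_mul] at this
    exact this
  have hPhiu : Tendsto (fun n => stdCdf (l * u n)) atTop (nhds 1) :=
    stdCdf_tendsto_one.comp (hutop.const_mul_atTop hl)
  have hu2 : Tendsto (fun n => ((u n)^2)⁻¹) atTop (nhds 0) :=
    tendsto_inv_atTop_zero.comp ((tendsto_pow_atTop two_ne_zero).comp hutop)
  have hL : Tendsto (fun n => stdCdf (l * u n) * (1 - ((u n)^2)⁻¹) * E n) atTop
      (nhds (Real.exp (-x))) := by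
    have h1 : Tendsto (fun n => 1 - ((u n)^2)⁻¹) atTop (nhds 1) := by
      have := (tendsto_const_nhds (x := (1:ℝ)) (f := atTop (α := ℕ))).sub hu2
      simpa using this
    have := (hPhiu.mul h1).mul hElim
    simpa using this
  have hT : Tendsto (fun n : ℕ => (n:ℝ) * snTail l (u n)) atTop (nhds (Real.exp (-x))) := by
    apply tendsto_of_tendsto_of_tendsto_of_le_of_le' hL hElim
    · filter_upwards [hev] with n hn
      obtain ⟨hn1, hbn⟩ := hn
      have hu1 : 1 ≤ u n := hu_ge n hbn
      have hu0 : (0:ℝ) < u n := lt_of_lt_of_le one_pos hu1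
      have hkey := heq n hn1 hbn
      have hge := snTail_ge (l := l) (t := u n) hl hu0
      have hn0 : (0:ℝ) < n := by exact_mod_cast hn1
      calc stdCdf (l * u n) * (1 - ((u n)^2)⁻¹) * E n
          = (n:ℝ) * (2 * stdCdf (l * u n) * (stdPhi (u n) * ((u n)⁻¹ - ((u n)^3)⁻¹))) := by
            rw [← hkey]; field_simp
        _ ≤ (n:ℝ) * snTail l (u n) := mul_le_mul_of_nonneg_left hge hn0.le
    · filter_upwards [hev] with n hn
      obtain ⟨hn1, hbn⟩ := hn
      have hu0 : (0:ℝ) < u n := lt_of_lt_of_le one_pos (hu_ge n hbn)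
      have hkey := heq n hn1 hbn
      have hle := snTail_le (l := l) hu0
      have hn0 : (0:ℝ) ≤ n := Nat.cast_nonneg n
      calc (n:ℝ) * snTail l (u n) ≤ (n:ℝ) * (2 * (stdPhi (u n) / u n)) := by
            apply mul_le_mul_of_nonneg_left _ hn0
            have := snTail_le (l := l) hu0
            linarith
        _ = E n := hkey
  -- epsilon
  set ε : ℕ → ℝ := fun n => snTail l (u n) with hε
  have hεpos : ∀ n, 0 < ε n := fun n => snTail_pos l (u n)
  have hεlim : Tendsto ε atTop (nhds 0) := by
    have h1 : Tendsto (fun n : ℕ => ((n:ℝ))⁻¹) atTop (nhds 0) :=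
      tendsto_inv_atTop_zero.comp tendsto_natCast_atTop_atTop
    have h2 := h1.mul hT
    rw [zero_mul] at h2
    apply h2.congr'
    filter_upwards [eventually_ge_atTop 1] with n hn1
    have hn0 : ((n:ℝ)) ≠ 0 := Nat.cast_ne_zero.2 (by omega)
    field_simp
    rfl
  have hεsmall : ∀ᶠ n in atTop, ε n < 1/2 :=
    hεlim.eventually_lt_const (by norm_num)
  -- log slope
  have hlog : Tendsto (fun n => Real.log (1 - ε n) / (-(ε n))) atTop (nhds 1) := by
    have hd : HasDerivAt Real.log 1 1 := by
      simpa using Real.hasDerivAt_log one_ne_zero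
    have hslope := hasDerivAt_iff_tendsto_slope.1 hd
    have h1 : Tendsto (fun n => 1 - ε n) atTop (nhdsWithin (1:ℝ) {(1:ℝ)}ᶜ) := by
      rw [tendsto_nhdsWithin_iff]
      constructor
      · have := (tendsto_const_nhds (x := (1:ℝ)) (f := atTop (α := ℕ))).sub hεlim
        simpa using this
      · filter_upwards with n
        simp only [Set.mem_compl_iff, Set.mem_singleton_iff]
        intro hcon
        have := hεpos n
        nlinarith [hcon]
    have h2 := hslope.comp h1
    apply h2.congr
    intro n
    simp only [Function.comp]
    rw [slope_def_field, Real.log_one]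
    have hne : ε n ≠ 0 := (hεpos n).ne'
    rw [show (1:ℝ) - ε n - 1 = -ε n by ring, sub_zero]
  -- final assembly
  have hnl : Tendsto (fun n : ℕ => (n:ℝ) * Real.log (1 - ε n)) atTop
      (nhds (-Real.exp (-x))) := by
    have h2 := hT.mul hlog
    rw [show Real.exp (-x) * 1 = Real.exp (-x) by ring] at h2
    have h3 := h2.neg
    apply h3.congr
    intro n
    have hne : ε n ≠ 0 := (hεpos n).ne'
    field_simp
    ring
  have hfin : Tendsto (fun n : ℕ => Real.exp ((n:ℝ) * Real.log (1 - ε n))) atTop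
      (nhds (Real.exp (-Real.exp (-x)))) :=
    (Real.continuous_exp.continuousAt.tendsto).comp hnl
  apply hfin.congr'
  filter_upwards [hεsmall] with n hsm
  have hpos : (0:ℝ) < 1 - ε n := by linarith
  have hsn : snCdf l ((b n)⁻¹ * x + b n) = 1 - ε n := by
    rw [hε]
    exact snCdf_eq_tail l (u n)
  rw [hsn, ← Real.log_pow, Real.exp_log (pow_pos hpos n)]
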